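/- Let (X_t)_{t≥0} be a free Lévy process with τ(X_t) = 0 and τ(X_t²) = t for all t > 0, so that t R_k(X_{2t}) = 2t R_k(X_t) for all k. Then for every k ≥ 1: R_k(2tX_t − tX_{2t}, X_{2t}, …, X_{2t}) = 0; the mixed free cumulants with the element 2tX_t − tX_{2t} appearing in exactly two of the first three slots also vanish; and R_k(2tX_t − tX_{2t}, 2tX_t − tX_{2t}, 2tX_t − tX_{2t}, X_{2t}, …, X_{2t}) = t²(2t R_k(X_t) − t R_k(X_{2t})) = 0. Consequently the third conditional central moment vanishes: τ((X_t − τ(X_t|X_{2t}))³ | X_{2t}) = τ((X_t − ½X_{2t})³ | X_{2t}) = 0 for all t > 0. -/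

import Mathlib

/-- A partition of `{0,…,n-1}` is non-crossing if no two distinct blocks cross. -/
def IsNonCrossing {n : ℕ} (ν : Finpartition (Finset.univ : Finset (Fin n))) : Prop :=
  ∀ B ∈ ν.parts, ∀ C ∈ ν.parts, B ≠ C →
    ∀ i ∈ B, ∀ k ∈ B, ∀ j ∈ C, ∀ l ∈ C, i < j → j < k → k < l → False

/-- The first `k` elements of `{0,…,n-1}` all lie in one block of the partition
(this is the defining condition of the class `NC^k`). -/
def FirstTogether {n : ℕ} (k : ℕ)
    (ν : Finpartition (Finset.univ : Finset (Fin n))) : Prop :=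
  ∃ B ∈ ν.parts, ∀ i : Fin n, (i : ℕ) < k → i ∈ B

/-- `R_ν(X₁,…,Xₙ) = ∏_{B ∈ ν} R_{|B|}(X_i : i ∈ B)`, the product of cumulant
functionals over the blocks of a partition (arguments in increasing order). -/
noncomputable def partCum {A : Type*} [Ring A] (R : (k : ℕ) → (Fin k → A) → ℂ)
    {n : ℕ} (X : Fin n → A)
    (ν : Finpartition (Finset.univ : Finset (Fin n))) : ℂ :=
  ∏ B ∈ ν.parts, R B.card (fun i => X (B.orderIsoOfFin rfl i).1)

/-- `R` is the family of free cumulant functionals of `τ` : the moment–cumulant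
formula `τ(X₁⋯Xₙ) = Σ_{ν ∈ NC(n)} R_ν(X₁,…,Xₙ)` holds. -/
def MomentCumulant {A : Type*} [Ring A] [Algebra ℂ A] (τ : A →ₗ[ℂ] ℂ)
    (R : (k : ℕ) → (Fin k → A) → ℂ) : Prop :=
  ∀ n : ℕ, 0 < n → ∀ X : Fin n → A,
    τ (List.ofFn X).prod =
      ∑ᶠ ν : {ν : Finpartition (Finset.univ : Finset (Fin n)) // IsNonCrossing ν},
        partCum R X ν.1

/-- `c^k` sums : `ncSum R Z k m = Σ_{ν ∈ NC^k(m)} R_ν(Z,…,Z)`. -/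
noncomputable def ncSum {A : Type*} [Ring A] (R : (k : ℕ) → (Fin k → A) → ℂ)
    (Z : A) (k m : ℕ) : ℂ :=
  ∑ᶠ ν : {ν : Finpartition (Finset.univ : Finset (Fin m)) //
      IsNonCrossing ν ∧ FirstTogether k ν},
    partCum R (fun _ => Z) ν.1

/-- `X` and `Y` are freely independent: all their mixed free cumulants vanish. -/
def FreeIndep {A : Type*} [Ring A] (R : (k : ℕ) → (Fin k → A) → ℂ)
    (X Y : A) : Prop :=
  ∀ k : ℕ, ∀ W : Fin k → A,
    (∀ i, W i = X ∨ W i = Y) → (∃ i j, W i ≠ W j) → R k W = 0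

/-- A (von Neumann algebra style) normal faithful tracial state on a complex
star algebra with a (weak-*) topology. -/
structure TracialState (A : Type*) [Ring A] [Algebra ℂ A] [StarRing A]
    [TopologicalSpace A] where
  τ : A →ₗ[ℂ] ℂ
  map_one : τ 1 = 1
  tracial : ∀ x y : A, τ (x * y) = τ (y * x)
  pos : ∀ x : A, 0 ≤ (τ (star x * x)).re ∧ (τ (star x * x)).im = 0
  faithful : ∀ x : A, τ (star x * x) = 0 → x = 0
  normal : ∀ z : A, Continuous fun y : A => τ (z * y)

/-- The (von Neumann) subalgebra generated by `V` and the identity: the closure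
of the unital algebra generated by `V`. -/
def vnGen {A : Type*} [Ring A] [Algebra ℂ A] [TopologicalSpace A] (V : A) : Set A :=
  closure ((Algebra.adjoin ℂ ({V} : Set A) : Subalgebra ℂ A) : Set A)

/-- `W` is the conditional expectation `τ(U | V)` of `U` onto the von Neumann
subalgebra generated by `V` and the identity: `W` belongs to that subalgebra and
`τ(U Y) = τ(W Y)` for every `Y` in it. -/
def IsCondExp {A : Type*} [Ring A] [Algebra ℂ A] [TopologicalSpace A]
    (τ : A →ₗ[ℂ] ℂ) (V U W : A) : Prop :=
  W ∈ vnGen V ∧ ∀ Y ∈ vnGen V, τ (U * Y) = τ (W * Y)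

/-- A free Lévy process: a noncommutative process with `X₀ = 0`, self-adjoint
values, stationary increments (increments over intervals of equal length have
the same moments) and freely independent increments (mixed free cumulants of
increments over non-overlapping intervals vanish). -/
structure IsFreeLevy {A : Type*} [Ring A] [Algebra ℂ A] [StarRing A]
    (τ : A →ₗ[ℂ] ℂ) (R : (k : ℕ) → (Fin k → A) → ℂ) (Xp : ℝ → A) : Prop where
  init : Xp 0 = 0
  selfadj : ∀ t : ℝ, 0 ≤ t → star (Xp t) = Xp t
  stationary : ∀ s t : ℝ, 0 ≤ s → 0 ≤ t → ∀ n : ℕ,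
    τ ((Xp (t + s) - Xp t) ^ n) = τ (Xp s ^ n)
  freeInc : ∀ (k : ℕ) (g : Fin k → ℝ × ℝ),
    (∀ i, 0 ≤ (g i).1 ∧ (g i).1 ≤ (g i).2) →
    (∀ i j, (g i).2 ≤ (g j).1 ∨ (g j).2 ≤ (g i).1 ∨ g i = g j) →
    (∃ i j, g i ≠ g j) →
    R k (fun i => Xp (g i).2 - Xp (g i).1) = 0

open Finset
open Finset

lemma strictMono_fin_nat_le {m : ℕ} (f : Fin m → ℕ) (hf : StrictMono f) (i : Fin m) :
    (i : ℕ) ≤ f i := by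
  have key : ∀ (N : ℕ) (i : Fin m), i.1 ≤ N → i.1 ≤ f i := by
    intro N
    induction N with
    | zero => intro i h; have h0 : i.1 = 0 := Nat.le_zero.mp h; rw [h0]; exact Nat.zero_le _
    | succ N ih =>
      intro i h
      by_cases h' : i.1 ≤ N
      · exact ih i h'
      · have hv : i.1 = N + 1 := by omega
        have hN : N < m := by omega
        have h1 : N ≤ f ⟨N, hN⟩ := by simpa using ih ⟨N, hN⟩ le_rfl
        have hlt : f ⟨N, hN⟩ < f i := hf (by rw [Fin.lt_def]; simp; omega)
        omega
  exact key i.1 i le_rfl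

lemma fin_strictMono_id {n : ℕ} (f : Fin n → Fin n) (hf : StrictMono f) (i : Fin n) : f i = i := by
  have h := (hf.range_inj strictMono_id).1
    (by
      rw [Set.range_id]
      exact Set.eq_univ_of_forall fun x => by
        rcases Finite.surjective_of_injective hf.injective x with ⟨y, rfl⟩
        exact Set.mem_range_self y)
  exact congrFun h i

lemma orderIsoOfFin_univ_val {n : ℕ} (i : Fin (univ : Finset (Fin n)).card) :
    (((univ : Finset (Fin n)).orderIsoOfFin rfl i : Fin n) : ℕ) = (i : ℕ) := by
  have hc : (univ : Finset (Fin n)).card = n := Finset.card_fin n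
  set iso := (univ : Finset (Fin n)).orderIsoOfFin rfl with hiso
  have hmono : StrictMono (fun j : Fin n => (iso (Fin.cast hc.symm j) : Fin n)) := by
    intro a b hab
    exact Subtype.coe_lt_coe.mpr (iso.strictMono (by rwa [Fin.lt_def] at hab ⊢))
  have hid := fin_strictMono_id _ hmono (Fin.cast hc i)
  have h2 : Fin.cast hc.symm (Fin.cast hc i) = i := rfl
  simp only [h2] at hid
  rw [hid]; rfl

section PartTop
variable {A : Type*} [Ring A]

noncomputable instance NCfintype {n : ℕ} :
    Fintype {ν : Finpartition (Finset.univ : Finset (Fin n)) // IsNonCrossing ν} := by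
  have : Finite (Finpartition (Finset.univ : Finset (Fin n))) :=
    Finite.of_injective Finpartition.parts fun a b h => Finpartition.ext h
  have : Finite {ν : Finpartition (Finset.univ : Finset (Fin n)) // IsNonCrossing ν} :=
    Subtype.finite
  exact Fintype.ofFinite _

lemma univ_ne_bot {n : ℕ} (hn : 0 < n) : (univ : Finset (Fin n)) ≠ ⊥ := by
  have : Nonempty (Fin n) := ⟨⟨0, hn⟩⟩
  simpa [Finset.bot_eq_empty] using (Finset.univ_nonempty (α := Fin n)).ne_empty

lemma nc_top {n : ℕ} (hn : 0 < n) : IsNonCrossing (Finpartition.indiscrete (univ_ne_bot (n := n) hn)) := by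
  intro B hB C hC hBC
  rw [Finpartition.indiscrete_parts] at hB hC
  exact absurd (by rw [Finset.mem_singleton.1 hB, Finset.mem_singleton.1 hC]) hBC

lemma partCum_top (R : (k : ℕ) → (Fin k → A) → ℂ) {n : ℕ} (hn : 0 < n) (X : Fin n → A) :
    partCum R X (Finpartition.indiscrete (univ_ne_bot hn)) = R n X := by
  unfold partCum
  rw [Finpartition.indiscrete_parts, Finset.prod_singleton]
  have hc : (univ : Finset (Fin n)).card = n := Finset.card_fin n
  have hcast : ∀ (m : ℕ) (h : m = n) (f : Fin m → A),
      R m f = R n (fun i => f (Fin.cast h.symm i)) := by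
    intro m h f; subst h; rfl
  rw [hcast (univ : Finset (Fin n)).card hc]
  congr 1
  funext i
  congr 1
  apply Fin.ext
  rw [orderIsoOfFin_univ_val]
  rfl

lemma cards_lt {n : ℕ} (hn : 0 < n) (ν : Finpartition (univ : Finset (Fin n)))
    (hne : ν ≠ Finpartition.indiscrete (univ_ne_bot hn)) :
    ∀ B ∈ ν.parts, B.card < n := by
  intro B hB
  have hsub : B ⊆ univ := Finset.subset_univ B
  have hle : B.card ≤ n := by
    calc B.card ≤ (univ : Finset (Fin n)).card := Finset.card_le_card hsub
    _ = n := Finset.card_fin n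
  rcases lt_or_eq_of_le hle with h | h
  · exact h
  · exfalso
    apply hne
    have hBuniv : B = univ := Finset.eq_univ_of_card B (by rw [h]; exact (Fintype.card_fin n).symm)
    apply Finpartition.ext
    rw [Finpartition.indiscrete_parts]
    ext C
    simp only [Finset.mem_singleton]
    constructor
    · intro hC
      obtain ⟨a, ha⟩ := Finpartition.nonempty_of_mem_parts ν hC
      have haB : a ∈ B := hBuniv ▸ Finset.mem_univ a
      exact (Finpartition.eq_of_mem_parts ν hC (hBuniv ▸ hB) ha haB).trans hBuniv
    · rintro rfl
      exact hBuniv ▸ hB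

end PartTop

section Multilin
variable {A : Type*} [Ring A] [Algebra ℂ A]

lemma tau_ofFn_update {n : ℕ} (X : Fin n → A) (i : Fin n) :
    ∃ P Q : A, ∀ v, (List.ofFn (Function.update X i v)).prod = P * v * Q := by
  refine ⟨((List.ofFn X).take i.1).prod, ((List.ofFn X).drop (i.1 + 1)).prod, fun v => ?_⟩
  have h1 : List.ofFn (Function.update X i v) = (List.ofFn X).set i.1 v := by
    apply List.ext_getElem (by simp)
    intro j h1 h2
    rw [List.getElem_ofFn, List.getElem_set]
    by_cases hj : i.1 = j
    · rw [if_pos hj]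
      have : (⟨j, by simpa using h1⟩ : Fin n) = i := Fin.ext hj.symm
      rw [this, Function.update_self]
    · rw [if_neg hj, List.getElem_ofFn]
      have hne : (⟨j, by simpa using h1⟩ : Fin n) ≠ i := fun hh => hj (congrArg Fin.val hh).symm
      exact Function.update_of_ne hne v X
  rw [h1, List.prod_set]
  have : i.1 < (List.ofFn X).length := by simp
  rw [if_pos this]

lemma partCum_update_factor (R : (k : ℕ) → (Fin k → A) → ℂ) {n : ℕ}
    (ν : Finpartition (univ : Finset (Fin n))) (X : Fin n → A) (i : Fin n) :
    ∃ (C : ℂ) (B0 : Finset (Fin n)), B0 ∈ ν.parts ∧ i ∈ B0 ∧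
      ∃ (g : Fin B0.card → A) (j0 : Fin B0.card),
        ∀ v, partCum R (Function.update X i v) ν = R B0.card (Function.update g j0 v) * C := by
  obtain ⟨B0, hB0, hiB0⟩ := ν.exists_mem (Finset.mem_univ i)
  set iso := B0.orderIsoOfFin rfl with hiso
  refine ⟨∏ B ∈ ν.parts.erase B0, R B.card (fun k => X ((B.orderIsoOfFin rfl k) : Fin n)),
    B0, hB0, hiB0, fun k => X ((iso k : Fin n)), iso.symm ⟨i, hiB0⟩, fun v => ?_⟩
  unfold partCum
  rw [← Finset.mul_prod_erase _ _ hB0]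
  congr 1
  · congr 1
    funext k
    by_cases hk : k = iso.symm ⟨i, hiB0⟩
    · subst hk
      rw [Function.update_self]
      have : ((iso (iso.symm ⟨i, hiB0⟩) : Fin n)) = i := by rw [OrderIso.apply_symm_apply]
      rw [this, Function.update_self]
    · rw [Function.update_of_ne hk]
      apply Function.update_of_ne
      intro hh
      apply hk
      have : iso k = ⟨i, hiB0⟩ := Subtype.ext hh
      rw [← this, OrderIso.symm_apply_apply]
  · apply Finset.prod_congr rfl
    intro B hB
    congr 1
    funext k
    apply Function.update_of_ne
    intro hh
    have hmem : ((B.orderIsoOfFin rfl k : Fin n)) ∈ B := (B.orderIsoOfFin rfl k).2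
    rw [hh] at hmem
    exact (Finset.mem_erase.1 hB).1
      (Finpartition.eq_of_mem_parts ν (Finset.mem_erase.1 hB).2 hB0 hmem hiB0)

theorem Rmultilin (τ : A →ₗ[ℂ] ℂ) (R : (k : ℕ) → (Fin k → A) → ℂ)
    (hR : MomentCumulant τ R) : ∀ n : ℕ,
    (∀ (X : Fin n → A) (i : Fin n) (a b : A),
      R n (Function.update X i (a + b)) = R n (Function.update X i a) + R n (Function.update X i b)) ∧
    (∀ (X : Fin n → A) (i : Fin n) (c : ℂ) (a : A),
      R n (Function.update X i (c • a)) = c * R n (Function.update X i a)) := by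
  intro n
  induction n using Nat.strong_induction_on with
  | _ n IH =>
    rcases n with _ | m
    · exact ⟨fun X i => i.elim0, fun X i => i.elim0⟩
    have hn : 0 < m + 1 := Nat.succ_pos m
    set tp : {ν : Finpartition (univ : Finset (Fin (m+1))) // IsNonCrossing ν} :=
      ⟨Finpartition.indiscrete (univ_ne_bot hn), nc_top hn⟩ with htp
    have hinv : ∀ X : Fin (m+1) → A,
        τ (List.ofFn X).prod = R (m+1) X +
          ∑ ν ∈ (Finset.univ).erase tp, partCum R X ν.1 := by
      intro X
      rw [hR (m+1) hn X, finsum_eq_sum_of_fintype]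
      rw [← Finset.add_sum_erase _ _ (Finset.mem_univ tp)]
      congr 1
      exact partCum_top R hn X
    have hcards : ∀ ν ∈ (Finset.univ : Finset {ν : Finpartition (univ : Finset (Fin (m+1))) // IsNonCrossing ν}).erase tp,
        ∀ B ∈ ν.1.parts, B.card < m + 1 := by
      intro ν hν
      apply cards_lt hn
      intro h
      exact (Finset.mem_erase.1 hν).1 (Subtype.ext h)
    constructor
    · intro X i a b
      obtain ⟨P, Q, hPQ⟩ := tau_ofFn_update X i
      have e1 := hinv (Function.update X i (a + b))
      have e2 := hinv (Function.update X i a)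
      have e3 := hinv (Function.update X i b)
      rw [hPQ] at e1 e2 e3
      have hτ : τ (P * (a + b) * Q) = τ (P * a * Q) + τ (P * b * Q) := by
        rw [mul_add, add_mul, map_add]
      have hS : ∑ ν ∈ (Finset.univ).erase tp, partCum R (Function.update X i (a+b)) ν.1
          = ∑ ν ∈ (Finset.univ).erase tp, partCum R (Function.update X i a) ν.1
            + ∑ ν ∈ (Finset.univ).erase tp, partCum R (Function.update X i b) ν.1 := by
        rw [← Finset.sum_add_distrib]
        apply Finset.sum_congr rfl
        intro ν hν
        obtain ⟨C, B0, hB0, hiB0, g, j0, hfac⟩ := partCum_update_factor R ν.1 X i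
        rw [hfac, hfac, hfac]
        rw [(IH B0.card (hcards ν hν B0 hB0)).1 g j0 a b, add_mul]
      linear_combination -e1 + e2 + e3 + hτ - hS
    · intro X i c a
      obtain ⟨P, Q, hPQ⟩ := tau_ofFn_update X i
      have e1 := hinv (Function.update X i (c • a))
      have e2 := hinv (Function.update X i a)
      rw [hPQ] at e1 e2
      have hτ : τ (P * (c • a) * Q) = c * τ (P * a * Q) := by
        rw [mul_smul_comm, smul_mul_assoc, map_smul, smul_eq_mul]
      have hS : ∑ ν ∈ (Finset.univ).erase tp, partCum R (Function.update X i (c • a)) ν.1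
          = c * ∑ ν ∈ (Finset.univ).erase tp, partCum R (Function.update X i a) ν.1 := by
        rw [Finset.mul_sum]
        apply Finset.sum_congr rfl
        intro ν hν
        obtain ⟨C, B0, hB0, hiB0, g, j0, hfac⟩ := partCum_update_factor R ν.1 X i
        rw [hfac, hfac]
        rw [(IH B0.card (hcards ν hν B0 hB0)).2 g j0 c a, mul_assoc]
      linear_combination -e1 + c * e2 + hτ - hS
end Multilin

section Expand
variable {A : Type*} [Ring A] (R : (k : ℕ) → (Fin k → A) → ℂ)

lemma expand_lemma {k : ℕ}
    (Radd : ∀ (X : Fin k → A) (i : Fin k) (a b : A),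
      R k (Function.update X i (a + b)) = R k (Function.update X i a) + R k (Function.update X i b))
    (F G : Fin k → A) :
    ∀ (S : Finset (Fin k)) (X : Fin k → A),
    R k (fun i => if i ∈ S then F i + G i else X i)
      = ∑ s ∈ S.powerset, R k (fun i => if i ∈ S then (if i ∈ s then F i else G i) else X i) := by
  intro S
  induction S using Finset.induction_on with
  | empty => intro X; simp
  | @insert a S' ha IH =>
    intro X
    have h1 : (fun i => if i ∈ insert a S' then F i + G i else X i)
        = Function.update (fun i => if i ∈ S' then F i + G i else X i) a (F a + G a) := by
      funext i
      by_cases hi : i = a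
      · subst hi; simp [ha]
      · rw [Function.update_of_ne hi]
        simp [Finset.mem_insert, hi]
    have h2 : Function.update (fun i => if i ∈ S' then F i + G i else X i) a (F a)
        = fun i => if i ∈ S' then F i + G i else (Function.update X a (F a)) i := by
      funext i
      by_cases hi : i = a
      · subst hi; simp [ha]
      · rw [Function.update_of_ne hi, Function.update_of_ne hi]
    have h3 : Function.update (fun i => if i ∈ S' then F i + G i else X i) a (G a)
        = fun i => if i ∈ S' then F i + G i else (Function.update X a (G a)) i := by
      funext i
      by_cases hi : i = a
      · subst hi; simp [ha]
      · rw [Function.update_of_ne hi, Function.update_of_ne hi]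
    rw [h1, Radd, h2, h3, IH, IH, Finset.sum_powerset_insert ha]
    rw [add_comm]
    congr 1
    · -- G-branch: s ↦ s
      apply Finset.sum_congr rfl
      intro s hs
      congr 1
      funext i
      by_cases hi : i = a
      · subst hi
        have hia : i ∉ s := fun h => ha (Finset.mem_powerset.1 hs h)
        simp [ha, hia]
      · by_cases hiS : i ∈ S' <;>
          simp [hi, hiS, Function.update_of_ne hi, Finset.mem_insert]
    · -- F-branch: s ↦ insert a s
      apply Finset.sum_congr rfl
      intro s hs
      congr 1
      funext i
      by_cases hi : i = a
      · subst hi; simp [ha]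
      · by_cases hiS : i ∈ S' <;>
          simp [hi, hiS, Function.update_of_ne hi, Finset.mem_insert]
end Expand

section Levy
set_option linter.unusedSectionVars false
variable {A : Type*} [Ring A] [Algebra ℂ A] [StarRing A]
variable {τ : A →ₗ[ℂ] ℂ} {R : (k : ℕ) → (Fin k → A) → ℂ} {Xp : ℝ → A}
variable {t : ℝ}

lemma mixed_vanish (hLevy : IsFreeLevy τ R Xp) (ht : 0 < t) {k : ℕ} (f : Fin k → Prop) [DecidablePred f]
    (h1 : ∃ i, f i) (h2 : ∃ j, ¬ f j) :
    R k (fun i => if f i then Xp t else (Xp (2 * t) - Xp t)) = 0 := by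
  have key := hLevy.freeInc k (fun i => if f i then ((0 : ℝ), t) else (t, 2 * t))
    (by intro i; by_cases hi : f i <;> simp [hi] <;> [skip; constructor] <;> linarith)
    (by
      intro i j
      by_cases hi : f i <;> by_cases hj : f j <;> simp [hi, hj])
    (by
      obtain ⟨i, hi⟩ := h1
      obtain ⟨j, hj⟩ := h2
      refine ⟨i, j, ?_⟩
      simp [hi, hj, Prod.ext_iff]
      intro h
      exact absurd h.symm ht.ne')
  have heq : (fun i => Xp (if f i then ((0:ℝ), t) else (t, 2*t)).2
      - Xp (if f i then ((0:ℝ), t) else (t, 2*t)).1)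
      = fun i => if f i then Xp t else (Xp (2 * t) - Xp t) := by
    funext i
    by_cases hi : f i <;> simp [hi, hLevy.init]
  rw [heq] at key
  exact key

lemma patternP (hLevy : IsFreeLevy τ R Xp) (ht : 0 < t) {k : ℕ} (hk : 0 < k)
    (Radd : ∀ (X : Fin k → A) (i : Fin k) (a b : A),
      R k (Function.update X i (a + b)) = R k (Function.update X i a) + R k (Function.update X i b))
    (T : Finset (Fin k)) (σ : Fin k → Bool) :
    R k (fun i => if i ∈ T then (if σ i then Xp t else Xp (2*t) - Xp t) else Xp (2*t)) =
      (if ∀ i ∈ T, σ i = true then R k (fun _ => Xp t) else 0)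
      + (if ∀ i ∈ T, σ i = false then R k (fun _ => Xp (2*t) - Xp t) else 0) := by
  classical
  set Y := Xp t with hY
  set D := Xp (2*t) - Xp t with hD
  have hX2 : Xp (2*t) = Y + D := by rw [hY, hD, add_sub_cancel]
  have hfun : (fun i => if i ∈ T then (if σ i then Y else D) else Xp (2*t))
      = fun i => if i ∈ Tᶜ then (fun _ : Fin k => Y) i + (fun _ : Fin k => D) i
          else (if σ i then Y else D) := by
    funext i
    by_cases hi : i ∈ T <;> simp [hi, Finset.mem_compl, hX2]
  rw [hfun, expand_lemma R Radd _ _ Tᶜ _]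
  have hterm : ∀ s : Finset (Fin k), (fun i => if i ∈ Tᶜ then (if i ∈ s then (fun _ : Fin k => Y) i
        else (fun _ : Fin k => D) i) else (if σ i then Y else D))
      = fun i => if ((i ∈ Tᶜ ∧ i ∈ s) ∨ (i ∉ Tᶜ ∧ σ i)) then Y else D := by
    intro s
    funext i
    by_cases hi : i ∈ Tᶜ <;> by_cases his : i ∈ s <;> by_cases hσ : σ i <;>
      simp [hi, his, hσ]
  by_cases hA : ∀ i ∈ T, σ i = true <;> by_cases hB : ∀ i ∈ T, σ i = false
  · -- T = ∅
    have hT : T = ∅ := by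
      apply Finset.eq_empty_of_forall_notMem
      intro i hi
      have := hA i hi; have := hB i hi; simp_all
    subst hT
    rw [if_pos hA, if_pos hB]
    have hcompl : (∅ : Finset (Fin k))ᶜ = Finset.univ := by simp
    have huniv : (∅ : Finset (Fin k))ᶜ ∈ (∅ : Finset (Fin k))ᶜ.powerset :=
      Finset.mem_powerset_self _
    rw [← Finset.add_sum_erase _ _ huniv]
    have hz : ∀ s ∈ (∅ : Finset (Fin k))ᶜ.powerset.erase (∅ : Finset (Fin k))ᶜ,
        R k (fun i => if i ∈ (∅ : Finset (Fin k))ᶜ then (if i ∈ s then (fun _ : Fin k => Y) i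
          else (fun _ : Fin k => D) i) else (if σ i then Y else D)) = 0 ∨ s = ∅ := by
      intro s hs
      by_cases hsne : s = ∅
      · exact Or.inr hsne
      left
      rw [hterm s]
      apply mixed_vanish hLevy ht
      · obtain ⟨i, hi⟩ := Finset.nonempty_iff_ne_empty.2 hsne
        exact ⟨i, Or.inl ⟨by simp, hi⟩⟩
      · have hsU : s ≠ (∅ : Finset (Fin k))ᶜ := (Finset.mem_erase.1 hs).1
        have : ∃ j, j ∉ s := by
          by_contra hcon
          push_neg at hcon
          exact hsU (by rw [hcompl]; exact Finset.eq_univ_of_forall hcon)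
        obtain ⟨j, hj⟩ := this
        exact ⟨j, by simp [hj]⟩
    have hempty : (∅ : Finset (Fin k)) ∈ (∅ : Finset (Fin k))ᶜ.powerset.erase (∅ : Finset (Fin k))ᶜ := by
      rw [Finset.mem_erase]
      refine ⟨?_, by simp⟩
      intro h
      have : Nonempty (Fin k) := ⟨⟨0, hk⟩⟩
      rw [hcompl] at h
      exact (Finset.univ_nonempty (α := Fin k)).ne_empty h.symm
    rw [Finset.sum_eq_single_of_mem _ hempty (fun s hs hne => ((hz s hs).resolve_right hne))]
    congr 1
    · rw [hterm]
      congr 1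
      funext i
      simp
    · rw [hterm]
      congr 1
      funext i
      simp
  · -- all true, some true exists
    rw [if_pos hA, if_neg hB, add_zero]
    push_neg at hB
    obtain ⟨i0, hi0T, hi0σ⟩ := hB
    have hi0σ' : σ i0 = true := by simpa using hi0σ
    rw [Finset.sum_eq_single_of_mem Tᶜ (Finset.mem_powerset_self _)]
    · rw [hterm]
      congr 1
      funext i
      by_cases hi : i ∈ T
      · simp [hi, hA i hi]
      · simp [Finset.mem_compl, hi]
    · intro s hs hne
      rw [hterm s]
      apply mixed_vanish hLevy ht
      · exact ⟨i0, Or.inr ⟨by simp [hi0T], hi0σ'⟩⟩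
      · have hss : s ⊂ Tᶜ := lt_of_le_of_ne (Finset.mem_powerset.1 hs) hne
        obtain ⟨j, hjT, hjs⟩ := Finset.exists_of_ssubset hss
        refine ⟨j, ?_⟩
        simp only [not_or, not_and]
        constructor
        · intro _; exact hjs
        · intro hj; exact absurd hjT hj
  · -- all false
    rw [if_neg hA, if_pos hB, zero_add]
    push_neg at hA
    obtain ⟨i0, hi0T, hi0σ⟩ := hA
    have hi0σ' : σ i0 = false := by simpa using hi0σ
    have hempty : (∅ : Finset (Fin k)) ∈ Tᶜ.powerset := by simp
    rw [Finset.sum_eq_single_of_mem _ hempty]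
    · rw [hterm]
      congr 1
      funext i
      by_cases hi : i ∈ T
      · simp [hi, hB i hi]
      · simp [Finset.mem_compl, hi]
    · intro s hs hne
      rw [hterm s]
      apply mixed_vanish hLevy ht
      · obtain ⟨j, hj⟩ := Finset.nonempty_iff_ne_empty.2 hne
        exact ⟨j, Or.inl ⟨Finset.mem_powerset.1 hs hj, hj⟩⟩
      · refine ⟨i0, ?_⟩
        simp only [not_or, not_and]
        constructor
        · intro hc; exact absurd hi0T (Finset.mem_compl.1 hc)
        · intro _; rw [hi0σ']; simp
  · -- mixed
    rw [if_neg hA, if_neg hB, add_zero]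
    push_neg at hA hB
    obtain ⟨i0, hi0T, hi0σ⟩ := hA
    obtain ⟨i1, hi1T, hi1σ⟩ := hB
    have hi0σ' : σ i0 = false := by simpa using hi0σ
    have hi1σ' : σ i1 = true := by simpa using hi1σ
    apply Finset.sum_eq_zero
    intro s hs
    rw [hterm s]
    apply mixed_vanish hLevy ht
    · exact ⟨i1, Or.inr ⟨by simp [hi1T], hi1σ'⟩⟩
    · refine ⟨i0, ?_⟩
      simp only [not_or, not_and]
      constructor
      · intro hc; exact absurd hi0T (Finset.mem_compl.1 hc)
      · intro _; rw [hi0σ']; simp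
end Levy

section Claims
set_option linter.unusedSectionVars false
variable {A : Type*} [Ring A] [Algebra ℂ A] [StarRing A]
variable {τ : A →ₗ[ℂ] ℂ} {R : (k : ℕ) → (Fin k → A) → ℂ} {Xp : ℝ → A}
variable {t : ℝ}

lemma RX2_split (hLevy : IsFreeLevy τ R Xp) (ht : 0 < t) {k : ℕ} (hk : 0 < k)
    (Radd : ∀ (X : Fin k → A) (i : Fin k) (a b : A),
      R k (Function.update X i (a + b)) = R k (Function.update X i a) + R k (Function.update X i b)) :
    R k (fun _ => Xp (2*t)) = R k (fun _ => Xp t) + R k (fun _ => Xp (2*t) - Xp t) := by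
  have h := patternP hLevy ht hk Radd ∅ (fun _ => false)
  have e : (fun i : Fin k => if i ∈ (∅ : Finset (Fin k)) then
      (if (fun _ : Fin k => false) i then Xp t else Xp (2*t) - Xp t) else Xp (2*t))
      = fun _ : Fin k => Xp (2*t) := by
    funext i; simp
  rw [e, if_pos (by simp), if_pos (by simp)] at h
  exact h

lemma RD_eq (hLevy : IsFreeLevy τ R Xp) (ht : 0 < t) {k : ℕ} (hk : 0 < k)
    (Radd : ∀ (X : Fin k → A) (i : Fin k) (a b : A),
      R k (Function.update X i (a + b)) = R k (Function.update X i a) + R k (Function.update X i b))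
    (hcumk : (t : ℂ) * R k (fun _ => Xp (2 * t)) = 2 * (t : ℂ) * R k (fun _ => Xp t)) :
    R k (fun _ => Xp (2*t) - Xp t) = R k (fun _ => Xp t) := by
  have hx := RX2_split hLevy ht hk Radd
  have ht0 : (t : ℂ) ≠ 0 := by exact_mod_cast ht.ne'
  have h2t : (2 * t : ℝ) = 2 * t := rfl
  have hcumk' : (t : ℂ) * R k (fun _ => Xp (2*t)) = 2 * (t : ℂ) * R k (fun _ => Xp t) := hcumk
  have key : (t : ℂ) * R k (fun _ => Xp (2*t) - Xp t) = (t : ℂ) * R k (fun _ => Xp t) := by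
    linear_combination hcumk' - (t : ℂ) * hx
  exact mul_left_cancel₀ ht0 key

lemma subZ (ht : 0 < t) {k : ℕ}
    (Radd : ∀ (X : Fin k → A) (i : Fin k) (a b : A),
      R k (Function.update X i (a + b)) = R k (Function.update X i a) + R k (Function.update X i b))
    (Rsmul : ∀ (X : Fin k → A) (i : Fin k) (c : ℂ) (a : A),
      R k (Function.update X i (c • a)) = c * R k (Function.update X i a))
    (X : Fin k → A) (i : Fin k) :
    R k (Function.update X i ((2 * (t : ℂ)) • Xp t - (t : ℂ) • Xp (2 * t)))
      = (t : ℂ) * R k (Function.update X i (Xp t))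
        - (t : ℂ) * R k (Function.update X i (Xp (2 * t) - Xp t)) := by
  have hZ : (2 * (t : ℂ)) • Xp t - (t : ℂ) • Xp (2 * t)
      = (t : ℂ) • Xp t + (-(t : ℂ)) • (Xp (2 * t) - Xp t) := by
    module
  rw [hZ, Radd, Rsmul, Rsmul]
  ring

lemma claim1 (hLevy : IsFreeLevy τ R Xp) (ht : 0 < t) {k : ℕ} (hk : 0 < k)
    (Radd : ∀ (X : Fin k → A) (i : Fin k) (a b : A),
      R k (Function.update X i (a + b)) = R k (Function.update X i a) + R k (Function.update X i b))
    (Rsmul : ∀ (X : Fin k → A) (i : Fin k) (c : ℂ) (a : A),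
      R k (Function.update X i (c • a)) = c * R k (Function.update X i a))
    (hcumk : (t : ℂ) * R k (fun _ => Xp (2 * t)) = 2 * (t : ℂ) * R k (fun _ => Xp t)) :
    R k (fun i : Fin k =>
      if (i : ℕ) = 0 then (2 * (t : ℂ)) • Xp t - (t : ℂ) • Xp (2 * t) else Xp (2 * t)) = 0 := by
  obtain ⟨m, rfl⟩ : ∃ m, k = m + 1 := ⟨k - 1, by omega⟩
  have h1 : (fun i : Fin (m+1) => if (i : ℕ) = 0 then
        (2 * (t : ℂ)) • Xp t - (t : ℂ) • Xp (2 * t) else Xp (2 * t))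
      = Function.update (fun _ => Xp (2*t)) 0 ((2 * (t : ℂ)) • Xp t - (t : ℂ) • Xp (2 * t)) := by
    funext i
    by_cases hi : i = 0
    · subst hi; simp
    · rw [Function.update_of_ne hi, if_neg (fun h => hi (Fin.ext (by simp [h])))]
  rw [h1, subZ ht Radd Rsmul]
  have h2 : Function.update (fun _ : Fin (m+1) => Xp (2*t)) 0 (Xp t)
      = fun i => if i ∈ ({0} : Finset (Fin (m+1))) then
          (if (fun _ : Fin (m+1) => true) i then Xp t else Xp (2*t) - Xp t) else Xp (2*t) := by
    funext i
    by_cases hi : i = 0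
    · subst hi; simp
    · rw [Function.update_of_ne hi]; simp [hi]
  have h3 : Function.update (fun _ : Fin (m+1) => Xp (2*t)) 0 (Xp (2*t) - Xp t)
      = fun i => if i ∈ ({0} : Finset (Fin (m+1))) then
          (if (fun _ : Fin (m+1) => false) i then Xp t else Xp (2*t) - Xp t) else Xp (2*t) := by
    funext i
    by_cases hi : i = 0
    · subst hi; simp
    · rw [Function.update_of_ne hi]; simp [hi]
  rw [h2, h3, patternP hLevy ht hk Radd ({0} : Finset (Fin (m+1))) (fun _ => true),
    patternP hLevy ht hk Radd ({0} : Finset (Fin (m+1))) (fun _ => false)]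
  rw [if_pos (by simp), if_neg (by simp), if_neg (by simp), if_pos (by simp)]
  rw [RD_eq hLevy ht hk Radd hcumk]
  ring
end Claims

section Claim3
set_option linter.unusedSectionVars false
variable {A : Type*} [Ring A] [Algebra ℂ A] [StarRing A]
variable {τ : A →ₗ[ℂ] ℂ} {R : (k : ℕ) → (Fin k → A) → ℂ} {Xp : ℝ → A}
variable {t : ℝ}

lemma claim3 (hLevy : IsFreeLevy τ R Xp) (ht : 0 < t) {k : ℕ} (hk3 : 3 ≤ k)
    (Radd : ∀ (X : Fin k → A) (i : Fin k) (a b : A),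
      R k (Function.update X i (a + b)) = R k (Function.update X i a) + R k (Function.update X i b))
    (Rsmul : ∀ (X : Fin k → A) (i : Fin k) (c : ℂ) (a : A),
      R k (Function.update X i (c • a)) = c * R k (Function.update X i a)) :
    R k (fun i : Fin k =>
        if (i : ℕ) < 3 then (2 * (t : ℂ)) • Xp t - (t : ℂ) • Xp (2 * t) else Xp (2 * t))
      = (t : ℂ) ^ 2 * (2 * (t : ℂ) * R k (fun _ => Xp t)
          - (t : ℂ) * R k (fun _ => Xp (2 * t))) := by
  have hk : 0 < k := by omega
  set i0 : Fin k := ⟨0, by omega⟩ with hi0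
  set i1 : Fin k := ⟨1, by omega⟩ with hi1
  set i2 : Fin k := ⟨2, by omega⟩ with hi2
  have h01 : i0 ≠ i1 := by simp [hi0, hi1, Fin.ext_iff]
  have h02 : i0 ≠ i2 := by simp [hi0, hi2, Fin.ext_iff]
  have h12 : i1 ≠ i2 := by simp [hi1, hi2, Fin.ext_iff]
  set C : Fin k → A := fun _ => Xp (2 * t) with hC
  set T : Finset (Fin k) := {i0, i1, i2} with hT
  -- triple pattern evaluation
  have htrip : ∀ p q r : Bool,
      R k (Function.update (Function.update (Function.update C i0
          (if p then Xp t else Xp (2*t) - Xp t)) i1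
          (if q then Xp t else Xp (2*t) - Xp t)) i2
          (if r then Xp t else Xp (2*t) - Xp t))
        = (if p = true ∧ q = true ∧ r = true then R k (fun _ => Xp t) else 0)
          + (if p = false ∧ q = false ∧ r = false then R k (fun _ => Xp (2*t) - Xp t) else 0) := by
    intro p q r
    set σ : Fin k → Bool := fun i => if i = i0 then p else if i = i1 then q else r with hσ
    have hfun : Function.update (Function.update (Function.update C i0
          (if p then Xp t else Xp (2*t) - Xp t)) i1
          (if q then Xp t else Xp (2*t) - Xp t)) i2
          (if r then Xp t else Xp (2*t) - Xp t)
        = fun i => if i ∈ T then (if σ i then Xp t else Xp (2*t) - Xp t) else Xp (2*t) := by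
      funext i
      by_cases hb2 : i = i2
      · subst hb2
        rw [Function.update_self]
        have : i2 ∈ T := by simp [hT]
        rw [if_pos this, hσ]
        simp [h02.symm, h12.symm]
      · rw [Function.update_of_ne hb2]
        by_cases hb1 : i = i1
        · subst hb1
          rw [Function.update_self]
          have : i1 ∈ T := by simp [hT]
          rw [if_pos this, hσ]
          simp [h01.symm]
        · rw [Function.update_of_ne hb1]
          by_cases hb0 : i = i0
          · subst hb0
            rw [Function.update_self]
            have : i0 ∈ T := by simp [hT]
            rw [if_pos this, hσ]
            simp
          · rw [Function.update_of_ne hb0]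
            have : i ∉ T := by simp [hT, hb0, hb1, hb2]
            rw [if_neg this, hC]
    rw [hfun, patternP hLevy ht hk Radd T σ]
    have hiff1 : (∀ i ∈ T, σ i = true) ↔ (p = true ∧ q = true ∧ r = true) := by
      constructor
      · intro h
        refine ⟨?_, ?_, ?_⟩
        · have := h i0 (by simp [hT]); rw [hσ] at this; simpa using this
        · have := h i1 (by simp [hT]); rw [hσ] at this; simpa [h01.symm] using this
        · have := h i2 (by simp [hT]); rw [hσ] at this; simpa [h02.symm, h12.symm] using this
      · rintro ⟨hp, hq, hr⟩ i hi
        rw [hT] at hi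
        simp only [Finset.mem_insert, Finset.mem_singleton] at hi
        rcases hi with rfl | rfl | rfl
        · rw [hσ]; simpa using hp
        · rw [hσ]; simp [h01.symm]; exact hq
        · rw [hσ]; simp [h02.symm, h12.symm]; exact hr
    have hiff2 : (∀ i ∈ T, σ i = false) ↔ (p = false ∧ q = false ∧ r = false) := by
      constructor
      · intro h
        refine ⟨?_, ?_, ?_⟩
        · have := h i0 (by simp [hT]); rw [hσ] at this; simpa using this
        · have := h i1 (by simp [hT]); rw [hσ] at this; simpa [h01.symm] using this
        · have := h i2 (by simp [hT]); rw [hσ] at this; simpa [h02.symm, h12.symm] using this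
      · rintro ⟨hp, hq, hr⟩ i hi
        rw [hT] at hi
        simp only [Finset.mem_insert, Finset.mem_singleton] at hi
        rcases hi with rfl | rfl | rfl
        · rw [hσ]; simpa using hp
        · rw [hσ]; simp [h01.symm]; exact hq
        · rw [hσ]; simp [h02.symm, h12.symm]; exact hr
    rw [if_congr hiff1 rfl rfl, if_congr hiff2 rfl rfl]
  -- shorthand
  set Zc : A := (2 * (t : ℂ)) • Xp t - (t : ℂ) • Xp (2 * t) with hZc
  have hG3 : (fun i : Fin k => if (i : ℕ) < 3 then Zc else Xp (2 * t))
      = Function.update (Function.update (Function.update C i0 Zc) i1 Zc) i2 Zc := by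
    funext i
    by_cases hb2 : i = i2
    · subst hb2; rw [Function.update_self, if_pos (by simp [hi2])]
    · rw [Function.update_of_ne hb2]
      by_cases hb1 : i = i1
      · subst hb1; rw [Function.update_self, if_pos (by simp [hi1])]
      · rw [Function.update_of_ne hb1]
        by_cases hb0 : i = i0
        · subst hb0; rw [Function.update_self, if_pos (by simp [hi0])]
        · rw [Function.update_of_ne hb0]
          rw [if_neg, hC]
          simp only [hi0, hi1, hi2, Fin.ext_iff] at hb0 hb1 hb2
          omega
  -- expansion equations
  have e2 : ∀ a b : A,
      R k (Function.update (Function.update (Function.update C i0 a) i1 b) i2 Zc)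
        = (t:ℂ) * R k (Function.update (Function.update (Function.update C i0 a) i1 b) i2 (Xp t))
          - (t:ℂ) * R k (Function.update (Function.update (Function.update C i0 a) i1 b) i2 (Xp (2*t) - Xp t)) :=
    fun a b => by rw [hZc]; exact subZ ht Radd Rsmul _ i2
  have e1 : ∀ a c : A,
      R k (Function.update (Function.update (Function.update C i0 a) i1 Zc) i2 c)
        = (t:ℂ) * R k (Function.update (Function.update (Function.update C i0 a) i1 (Xp t)) i2 c)
          - (t:ℂ) * R k (Function.update (Function.update (Function.update C i0 a) i1 (Xp (2*t) - Xp t)) i2 c) := by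
    intro a c
    have hsw : ∀ v : A, Function.update (Function.update (Function.update C i0 a) i1 v) i2 c
        = Function.update (Function.update (Function.update C i0 a) i2 c) i1 v := by
      intro v
      funext x
      by_cases hx2 : x = i2
      · subst hx2
        rw [Function.update_self, Function.update_of_ne h12.symm, Function.update_self]
      · rw [Function.update_of_ne hx2]
        by_cases hx1 : x = i1
        · subst hx1
          rw [Function.update_self, Function.update_self]
        · rw [Function.update_of_ne hx1, Function.update_of_ne hx1, Function.update_of_ne hx2]
    rw [hsw Zc, hsw (Xp t), hsw (Xp (2*t) - Xp t), hZc]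
    exact subZ ht Radd Rsmul _ i1
  have e0 : ∀ b c : A,
      R k (Function.update (Function.update (Function.update C i0 Zc) i1 b) i2 c)
        = (t:ℂ) * R k (Function.update (Function.update (Function.update C i0 (Xp t)) i1 b) i2 c)
          - (t:ℂ) * R k (Function.update (Function.update (Function.update C i0 (Xp (2*t) - Xp t)) i1 b) i2 c) := by
    intro b c
    have hsw : ∀ v : A, Function.update (Function.update (Function.update C i0 v) i1 b) i2 c
        = Function.update (Function.update (Function.update C i1 b) i2 c) i0 v := by
      intro v
      funext x
      by_cases hx2 : x = i2
      · subst hx2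
        rw [Function.update_self, Function.update_of_ne h02.symm, Function.update_self]
      · rw [Function.update_of_ne hx2]
        by_cases hx1 : x = i1
        · subst hx1
          rw [Function.update_self, Function.update_of_ne h01.symm, Function.update_of_ne h12,
            Function.update_self]
        · rw [Function.update_of_ne hx1]
          by_cases hx0 : x = i0
          · subst hx0
            rw [Function.update_self, Function.update_self]
          · rw [Function.update_of_ne hx0, Function.update_of_ne hx0,
              Function.update_of_ne hx2, Function.update_of_ne hx1]
    rw [hsw Zc, hsw (Xp t), hsw (Xp (2*t) - Xp t), hZc]
    exact subZ ht Radd Rsmul _ i0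
  rw [hG3, e2, e1, e1, e0, e0, e0, e0]
  have hYYY := htrip true true true
  have hDDD := htrip false false false
  have hYYD := htrip true true false
  have hYDY := htrip true false true
  have hDYY := htrip false true true
  have hYDD := htrip true false false
  have hDYD := htrip false true false
  have hDDY := htrip false false true
  simp at hYYY hDDD hYYD hYDY hDYY hYDD hDYD hDDY
  rw [hYYY, hDDD, hYYD, hYDY, hDYY, hYDD, hDYD, hDDY]
  have hx := RX2_split hLevy ht hk Radd
  linear_combination (t : ℂ)^3 * hx
end Claim3

section Factors
variable {A : Type*} [Ring A]

lemma factor_min (R : (k : ℕ) → (Fin k → A) → ℂ) {k : ℕ} (Z X2 : A) (X : Fin k → A)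
    (C : Finset (Fin k)) (j : Fin k) (hj : j ∈ C) (hmin : ∀ e ∈ C, j ≤ e)
    (hXj : X j = Z) (hother : ∀ e ∈ C, e ≠ j → X e = X2) :
    R C.card (fun i => X ((C.orderIsoOfFin rfl i) : Fin k))
      = R C.card (fun i => if (i : ℕ) = 0 then Z else X2) := by
  have hpos : 0 < C.card := Finset.card_pos.2 ⟨j, hj⟩
  set iso := C.orderIsoOfFin rfl with hiso
  have hiso0 : ((iso ⟨0, hpos⟩ : Fin k)) = j := by
    apply le_antisymm
    · have h1 : iso ⟨0, hpos⟩ ≤ iso (iso.symm ⟨j, hj⟩) :=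
        iso.monotone (Fin.le_def.mpr (Nat.zero_le _))
      rw [OrderIso.apply_symm_apply] at h1
      exact Subtype.coe_le_coe.mpr h1
    · exact hmin _ (iso ⟨0, hpos⟩).2
  congr 1
  funext i
  by_cases hi : (i : ℕ) = 0
  · have hieq : i = ⟨0, hpos⟩ := Fin.ext hi
    rw [hieq, hiso0, hXj, if_pos rfl]
  · rw [if_neg hi]
    apply hother _ (iso i).2
    intro he
    apply hi
    have h1 : iso i = iso ⟨0, hpos⟩ := Subtype.ext (he.trans hiso0.symm)
    have h2 : i = ⟨0, hpos⟩ := iso.injective h1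
    exact congrArg Fin.val h2

lemma factor_first3 (R : (k : ℕ) → (Fin k → A) → ℂ) {k : ℕ} (hk3 : 3 ≤ k) (Z X2 : A)
    (X : Fin k → A) (B : Finset (Fin k))
    (h0 : (⟨0, by omega⟩ : Fin k) ∈ B) (h1 : (⟨1, by omega⟩ : Fin k) ∈ B)
    (h2 : (⟨2, by omega⟩ : Fin k) ∈ B)
    (hXlt : ∀ e : Fin k, (e : ℕ) < 3 → X e = Z) (hXge : ∀ e : Fin k, 3 ≤ (e : ℕ) → X e = X2) :
    R B.card (fun i => X ((B.orderIsoOfFin rfl i) : Fin k))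
      = R B.card (fun i => if (i : ℕ) < 3 then Z else X2) := by
  set iso := B.orderIsoOfFin rfl with hiso
  have hmono : StrictMono (fun i : Fin B.card => (((iso i : Fin k)) : ℕ)) := by
    intro a b hab
    exact Fin.lt_def.mp (Subtype.coe_lt_coe.mpr (iso.strictMono hab))
  have hval : ∀ i : Fin B.card, (i : ℕ) ≤ ((iso i : Fin k) : ℕ) :=
    fun i => strictMono_fin_nat_le _ hmono i
  set p0 := iso.symm ⟨⟨0, by omega⟩, h0⟩ with hp0
  set p1 := iso.symm ⟨⟨1, by omega⟩, h1⟩ with hp1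
  set p2 := iso.symm ⟨⟨2, by omega⟩, h2⟩ with hp2
  have hv0 : (p0 : ℕ) ≤ 0 := by
    have := hval p0
    rw [hp0, OrderIso.apply_symm_apply] at this
    exact this
  have hv1 : (p1 : ℕ) ≤ 1 := by
    have := hval p1
    rw [hp1, OrderIso.apply_symm_apply] at this
    exact this
  have hv2 : (p2 : ℕ) ≤ 2 := by
    have := hval p2
    rw [hp2, OrderIso.apply_symm_apply] at this
    exact this
  have h01 : p0 < p1 := by
    rw [hp0, hp1]
    apply iso.symm.strictMono
    exact Subtype.mk_lt_mk.mpr (Fin.lt_def.mpr (by norm_num))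
  have h12 : p1 < p2 := by
    rw [hp1, hp2]
    apply iso.symm.strictMono
    exact Subtype.mk_lt_mk.mpr (Fin.lt_def.mpr (by norm_num))
  have hval0 : (p0 : ℕ) = 0 := by
    have := Fin.lt_def.mp h01; have := Fin.lt_def.mp h12; omega
  have hval1 : (p1 : ℕ) = 1 := by
    have := Fin.lt_def.mp h01; have := Fin.lt_def.mp h12; omega
  have hval2 : (p2 : ℕ) = 2 := by
    have := Fin.lt_def.mp h01; have := Fin.lt_def.mp h12; omega
  congr 1
  funext i
  by_cases hi : (i : ℕ) < 3
  · rw [if_pos hi]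
    apply hXlt
    have : i = p0 ∨ i = p1 ∨ i = p2 := by
      rcases (by omega : (i : ℕ) = 0 ∨ (i : ℕ) = 1 ∨ (i : ℕ) = 2) with h | h | h
      · exact Or.inl (Fin.ext (by omega))
      · exact Or.inr (Or.inl (Fin.ext (by omega)))
      · exact Or.inr (Or.inr (Fin.ext (by omega)))
    rcases this with rfl | rfl | rfl
    · rw [hp0, OrderIso.apply_symm_apply]; norm_num
    · rw [hp1, OrderIso.apply_symm_apply]; norm_num
    · rw [hp2, OrderIso.apply_symm_apply]; norm_num
  · rw [if_neg hi]
    apply hXge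
    have := hval i
    omega
end Factors

section Main0
set_option linter.unusedSectionVars false
variable {A : Type*} [Ring A] [Algebra ℂ A] [StarRing A]
variable {τ : A →ₗ[ℂ] ℂ} {R : (k : ℕ) → (Fin k → A) → ℂ} {Xp : ℝ → A}
variable {t : ℝ}

lemma claim3zero (hLevy : IsFreeLevy τ R Xp) (ht : 0 < t) {k : ℕ} (hk3 : 3 ≤ k)
    (Radd : ∀ (X : Fin k → A) (i : Fin k) (a b : A),
      R k (Function.update X i (a + b)) = R k (Function.update X i a) + R k (Function.update X i b))
    (Rsmul : ∀ (X : Fin k → A) (i : Fin k) (c : ℂ) (a : A),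
      R k (Function.update X i (c • a)) = c * R k (Function.update X i a))
    (hcumk : (t : ℂ) * R k (fun _ => Xp (2 * t)) = 2 * (t : ℂ) * R k (fun _ => Xp t)) :
    R k (fun i : Fin k =>
      if (i : ℕ) < 3 then (2 * (t : ℂ)) • Xp t - (t : ℂ) • Xp (2 * t) else Xp (2 * t)) = 0 := by
  rw [claim3 hLevy ht hk3 Radd Rsmul]
  linear_combination -(t : ℂ)^2 * hcumk

lemma main0 (hLevy : IsFreeLevy τ R Xp) (ht : 0 < t)
    (hml : ∀ n : ℕ,
      (∀ (X : Fin n → A) (i : Fin n) (a b : A),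
        R n (Function.update X i (a + b)) = R n (Function.update X i a) + R n (Function.update X i b)) ∧
      (∀ (X : Fin n → A) (i : Fin n) (c : ℂ) (a : A),
        R n (Function.update X i (c • a)) = c * R n (Function.update X i a)))
    (hcumA : ∀ k' : ℕ, (t : ℂ) * R k' (fun _ => Xp (2 * t)) = 2 * (t : ℂ) * R k' (fun _ => Xp t))
    {k : ℕ} (hk3 : 3 ≤ k) (ν : Finpartition (Finset.univ : Finset (Fin k))) :
    partCum R (fun i : Fin k =>
      if (i : ℕ) < 3 then (2 * (t : ℂ)) • Xp t - (t : ℂ) • Xp (2 * t) else Xp (2 * t)) ν = 0 := by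
  set Zc : A := (2 * (t : ℂ)) • Xp t - (t : ℂ) • Xp (2 * t) with hZc
  set X : Fin k → A := fun i => if (i : ℕ) < 3 then Zc else Xp (2 * t) with hX
  have hXlt : ∀ e : Fin k, (e : ℕ) < 3 → X e = Zc := fun e he => by rw [hX]; simp [he]
  have hXge : ∀ e : Fin k, 3 ≤ (e : ℕ) → X e = Xp (2 * t) := fun e he => by
    rw [hX]; simp only []; rw [if_neg (by omega)]
  set e0 : Fin k := ⟨0, by omega⟩ with he0
  set e1 : Fin k := ⟨1, by omega⟩ with he1
  set e2 : Fin k := ⟨2, by omega⟩ with he2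
  obtain ⟨B, hB, h0B⟩ := ν.exists_mem (Finset.mem_univ e0)
  -- a generic "other block" step
  have hstep : ∀ (Cb : Finset (Fin k)) (j : Fin k), Cb ∈ ν.parts → j ∈ Cb → (j : ℕ) < 3 →
      (∀ e ∈ Cb, e ≠ j → 3 ≤ (e : ℕ)) → partCum R X ν = 0 := by
    intro Cb j hCb hjC hj3 hrest
    apply Finset.prod_eq_zero hCb
    rw [factor_min R Zc (Xp (2 * t)) X Cb j hjC]
    · exact claim1 hLevy ht (Finset.card_pos.2 ⟨j, hjC⟩) (hml Cb.card).1 (hml Cb.card).2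
        (hcumA Cb.card)
    · intro e heC
      by_contra hlt
      push_neg at hlt
      have hne : e ≠ j := fun h => lt_irrefl j (h ▸ hlt)
      have := hrest e heC hne
      have hje := Fin.lt_def.mp hlt
      omega
    · exact hXlt j hj3
    · intro e heC hne
      exact hXge e (hrest e heC hne)
  by_cases h1B : e1 ∈ B <;> by_cases h2B : e2 ∈ B
  · -- all of 0,1,2 in B
    apply Finset.prod_eq_zero hB
    have hsub : ({e0, e1, e2} : Finset (Fin k)) ⊆ B := by
      intro x hx
      simp only [Finset.mem_insert, Finset.mem_singleton] at hx
      rcases hx with rfl | rfl | rfl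
      exacts [h0B, h1B, h2B]
    have hcard3 : 3 ≤ B.card := by
      have h3 : ({e0, e1, e2} : Finset (Fin k)).card = 3 := by
        rw [Finset.card_insert_of_notMem (by simp [he0, he1, he2, Fin.ext_iff]),
          Finset.card_insert_of_notMem (by simp [he1, he2, Fin.ext_iff]),
          Finset.card_singleton]
      calc 3 = ({e0, e1, e2} : Finset (Fin k)).card := h3.symm
      _ ≤ B.card := Finset.card_le_card hsub
    rw [factor_first3 R hk3 Zc (Xp (2 * t)) X B (he0 ▸ h0B) (he1 ▸ h1B) (he2 ▸ h2B) hXlt hXge]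
    exact claim3zero hLevy ht hcard3 (hml B.card).1 (hml B.card).2 (hcumA B.card)
  · -- e1 ∈ B, e2 ∉ B : use block of e2
    obtain ⟨Cb, hCb, hjC⟩ := ν.exists_mem (Finset.mem_univ e2)
    have hCne : Cb ≠ B := fun h => h2B (h ▸ hjC)
    apply hstep Cb e2 hCb hjC (by rw [he2]; norm_num)
    intro e heC hne
    by_contra hlt
    push_neg at hlt
    have : e = e0 ∨ e = e1 ∨ e = e2 := by
      rcases (by omega : (e : ℕ) = 0 ∨ (e : ℕ) = 1 ∨ (e : ℕ) = 2) with h | h | h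
      · exact Or.inl (by rw [he0]; exact Fin.ext h)
      · exact Or.inr (Or.inl (by rw [he1]; exact Fin.ext h))
      · exact Or.inr (Or.inr (by rw [he2]; exact Fin.ext h))
    rcases this with rfl | rfl | rfl
    · exact hCne (Finpartition.eq_of_mem_parts ν hCb hB heC h0B)
    · exact hCne (Finpartition.eq_of_mem_parts ν hCb hB heC h1B)
    · exact hne rfl
  · -- e1 ∉ B, e2 ∈ B : use block of e1
    obtain ⟨Cb, hCb, hjC⟩ := ν.exists_mem (Finset.mem_univ e1)
    have hCne : Cb ≠ B := fun h => h1B (h ▸ hjC)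
    apply hstep Cb e1 hCb hjC (by rw [he1]; norm_num)
    intro e heC hne
    by_contra hlt
    push_neg at hlt
    have : e = e0 ∨ e = e1 ∨ e = e2 := by
      rcases (by omega : (e : ℕ) = 0 ∨ (e : ℕ) = 1 ∨ (e : ℕ) = 2) with h | h | h
      · exact Or.inl (by rw [he0]; exact Fin.ext h)
      · exact Or.inr (Or.inl (by rw [he1]; exact Fin.ext h))
      · exact Or.inr (Or.inr (by rw [he2]; exact Fin.ext h))
    rcases this with rfl | rfl | rfl
    · exact hCne (Finpartition.eq_of_mem_parts ν hCb hB heC h0B)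
    · exact hne rfl
    · exact hCne (Finpartition.eq_of_mem_parts ν hCb hB heC h2B)
  · -- neither e1 nor e2 in B
    apply hstep B e0 hB h0B (by rw [he0]; norm_num)
    intro e heB hne
    by_contra hlt
    push_neg at hlt
    have : e = e0 ∨ e = e1 ∨ e = e2 := by
      rcases (by omega : (e : ℕ) = 0 ∨ (e : ℕ) = 1 ∨ (e : ℕ) = 2) with h | h | h
      · exact Or.inl (by rw [he0]; exact Fin.ext h)
      · exact Or.inr (Or.inl (by rw [he1]; exact Fin.ext h))
      · exact Or.inr (Or.inr (by rw [he2]; exact Fin.ext h))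
    rcases this with rfl | rfl | rfl
    · exact hne rfl
    · exact h1B heB
    · exact h2B heB
end Main0

section Final
set_option linter.unusedSectionVars false
variable {A : Type*} [Ring A] [Algebra ℂ A] [StarRing A]
variable {τ : A →ₗ[ℂ] ℂ} {R : (k : ℕ) → (Fin k → A) → ℂ} {Xp : ℝ → A}
variable {t : ℝ}

lemma prodZ (z x : A) (m : ℕ) :
    (List.ofFn (fun i : Fin (3 + m) => if (i : ℕ) < 3 then z else x)).prod = z ^ 3 * x ^ m := by
  rw [List.ofFn_add, List.prod_append]
  have h1 : (fun i : Fin 3 =>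
      (fun i : Fin (3 + m) => if (i : ℕ) < 3 then z else x) (Fin.castAdd m i)) = fun _ => z := by
    funext i
    simp only [Fin.coe_castAdd]
    rw [if_pos i.2]
  have h2 : (fun j : Fin m =>
      (fun i : Fin (3 + m) => if (i : ℕ) < 3 then z else x) (Fin.natAdd 3 j)) = fun _ => x := by
    funext j
    simp only [Fin.coe_natAdd]
    rw [if_neg (by omega)]
  simp only [Fin.coe_castLE, Fin.coe_natAdd, Fin.is_lt, if_true,
    show ∀ j : Fin m, ¬ (3 + (j : ℕ) < 3) from fun j => by omega, if_false,
    List.ofFn_const, List.prod_replicate]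

lemma tauZ (hR : MomentCumulant τ R) (hLevy : IsFreeLevy τ R Xp) (ht : 0 < t)
    (hcumA : ∀ k' : ℕ, (t : ℂ) * R k' (fun _ => Xp (2 * t)) = 2 * (t : ℂ) * R k' (fun _ => Xp t))
    (m : ℕ) :
    τ (((2 * (t : ℂ)) • Xp t - (t : ℂ) • Xp (2 * t)) ^ 3 * Xp (2 * t) ^ m) = 0 := by
  have hml := Rmultilin τ R hR
  have hp := hR (3 + m) (by omega)
    (fun i : Fin (3 + m) =>
      if (i : ℕ) < 3 then (2 * (t : ℂ)) • Xp t - (t : ℂ) • Xp (2 * t) else Xp (2 * t))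
  rw [prodZ] at hp
  rw [hp]
  have hz : ∀ ν : {ν : Finpartition (Finset.univ : Finset (Fin (3 + m))) // IsNonCrossing ν},
      partCum R (fun i : Fin (3 + m) =>
        if (i : ℕ) < 3 then (2 * (t : ℂ)) • Xp t - (t : ℂ) • Xp (2 * t) else Xp (2 * t)) ν.1
        = 0 := fun ν => main0 hLevy ht hml hcumA (by omega) ν.1
  calc (∑ᶠ ν : {ν : Finpartition (Finset.univ : Finset (Fin (3 + m))) // IsNonCrossing ν},
      partCum R (fun i : Fin (3 + m) =>
        if (i : ℕ) < 3 then (2 * (t : ℂ)) • Xp t - (t : ℂ) • Xp (2 * t) else Xp (2 * t)) ν.1)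
      = ∑ᶠ _ : {ν : Finpartition (Finset.univ : Finset (Fin (3 + m))) // IsNonCrossing ν},
          (0 : ℂ) := finsum_congr hz
  _ = 0 := finsum_zero
end Final
/-- proof of Proposition 3.6. Let `(X_t)` be a free Lévy
process with `τ(X_t) = 0`, `τ(X_t²) = t`, so that `t R_k(X_{2t}) = 2t R_k(X_t)`
for all `k`. Then for all `t > 0` and `k ≥ 1`,
`R_k(2tX_t − tX_{2t}, X_{2t}, …, X_{2t}) = 0`; every partition term in which
the block containing the first slot contains exactly one of the second and
third slots (where the first three entries are `2tX_t − tX_{2t}` and the rest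
are `X_{2t}`) vanishes; for `k ≥ 3`
`R_k(2tX_t − tX_{2t}, 2tX_t − tX_{2t}, 2tX_t − tX_{2t}, X_{2t}, …, X_{2t})
 = t²(2t R_k(X_t) − t R_k(X_{2t})) = 0`; and consequently the third conditional
central moment vanishes: `τ((X_t − ½X_{2t})³ | X_{2t}) = 0`. -/
theorem stmt15 {A : Type*} [Ring A] [Algebra ℂ A] [StarRing A] [TopologicalSpace A]
    (ts : TracialState A) (R : (k : ℕ) → (Fin k → A) → ℂ)
    (hR : MomentCumulant ts.τ R)
    (Xp : ℝ → A) (hLevy : IsFreeLevy ts.τ R Xp)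
    (hmean : ∀ t : ℝ, 0 < t → ts.τ (Xp t) = 0)
    (hvar : ∀ t : ℝ, 0 < t → ts.τ (Xp t ^ 2) = (t : ℂ))
    (hcum : ∀ t : ℝ, 0 < t → ∀ k : ℕ,
      (t : ℂ) * R k (fun _ => Xp (2 * t)) = 2 * (t : ℂ) * R k (fun _ => Xp t)) :
    (∀ t : ℝ, 0 < t → ∀ k : ℕ, 1 ≤ k →
      R k (fun i : Fin k =>
          if (i : ℕ) = 0 then (2 * (t : ℂ)) • Xp t - (t : ℂ) • Xp (2 * t)
          else Xp (2 * t)) = 0) ∧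
    (∀ t : ℝ, 0 < t → ∀ n : ℕ,
      ∀ ν : Finpartition (Finset.univ : Finset (Fin (n + 3))), IsNonCrossing ν →
        ∀ B ∈ ν.parts, (0 : Fin (n + 3)) ∈ B →
          (((1 : Fin (n + 3)) ∈ B ∧ (2 : Fin (n + 3)) ∉ B) ∨
            ((2 : Fin (n + 3)) ∈ B ∧ (1 : Fin (n + 3)) ∉ B)) →
          partCum R (fun i : Fin (n + 3) =>
              if (i : ℕ) < 3 then (2 * (t : ℂ)) • Xp t - (t : ℂ) • Xp (2 * t)
              else Xp (2 * t)) ν = 0) ∧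
    (∀ t : ℝ, 0 < t → ∀ k : ℕ, 3 ≤ k →
      R k (fun i : Fin k =>
            if (i : ℕ) < 3 then (2 * (t : ℂ)) • Xp t - (t : ℂ) • Xp (2 * t)
            else Xp (2 * t))
          = (t : ℂ) ^ 2 * (2 * (t : ℂ) * R k (fun _ => Xp t)
              - (t : ℂ) * R k (fun _ => Xp (2 * t))) ∧
        (t : ℂ) ^ 2 * (2 * (t : ℂ) * R k (fun _ => Xp t)
            - (t : ℂ) * R k (fun _ => Xp (2 * t))) = 0) ∧
    (∀ t : ℝ, 0 < t →
      IsCondExp ts.τ (Xp (2 * t)) ((Xp t - ((1 / 2 : ℂ)) • Xp (2 * t)) ^ 3) 0) := by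
  have hml := Rmultilin ts.τ R hR
  refine ⟨?_, ?_, ?_, ?_⟩
  · intro t ht k hk
    exact claim1 hLevy ht hk (hml k).1 (hml k).2 (hcum t ht k)
  · intro t ht n ν _ B _ _ _
    exact main0 hLevy ht hml (hcum t ht) (by omega) ν
  · intro t ht k hk3
    refine ⟨claim3 hLevy ht hk3 (hml k).1 (hml k).2, ?_⟩
    linear_combination -(t : ℂ) ^ 2 * (hcum t ht k)
  · intro t ht
    have ht0 : (t : ℂ) ≠ 0 := by exact_mod_cast ht.ne'
    have hU : Xp t - ((1 / 2 : ℂ)) • Xp (2 * t)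
        = (1 / (2 * (t : ℂ))) • ((2 * (t : ℂ)) • Xp t - (t : ℂ) • Xp (2 * t)) := by
      rw [smul_sub, smul_smul, smul_smul]
      rw [show (1 / (2 * (t : ℂ))) * (2 * (t : ℂ)) = 1 from by field_simp]
      rw [show (1 / (2 * (t : ℂ))) * (t : ℂ) = (1 / 2 : ℂ) from by
        field_simp]
      rw [one_smul]
    have key : ∀ m : ℕ,
        ts.τ ((Xp t - ((1 / 2 : ℂ)) • Xp (2 * t)) ^ 3 * Xp (2 * t) ^ m) = 0 := by
      intro m
      rw [hU, smul_pow, smul_mul_assoc, map_smul, smul_eq_mul,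
        tauZ hR hLevy ht (hcum t ht) m, mul_zero]
    constructor
    · exact subset_closure (Subalgebra.zero_mem _)
    · intro Ybar hY
      rw [zero_mul, map_zero]
      have hcl : vnGen (Xp (2 * t)) ⊆
          {y : A | ts.τ ((Xp t - ((1 / 2 : ℂ)) • Xp (2 * t)) ^ 3 * y) = 0} := by
        apply closure_minimal
        · intro y hy
          have hy' : y ∈ (Polynomial.aeval (R := ℂ) (Xp (2 * t))).range := by
            rw [← Algebra.adjoin_singleton_eq_range_aeval]
            exact hy
          obtain ⟨p, rfl⟩ := hy'
          show ts.τ (_ * Polynomial.aeval (R := ℂ) (Xp (2 * t)) p) = 0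
          rw [Polynomial.aeval_eq_sum_range, Finset.mul_sum, map_sum]
          apply Finset.sum_eq_zero
          intro i _
          rw [mul_smul_comm, map_smul, smul_eq_mul, key i, mul_zero]
        · exact (isClosed_singleton (x := (0 : ℂ))).preimage (ts.normal _)
      exact hcl hY
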